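/- Let c and r be positive integers with c not congruent to 2 modulo 3 and with r ≥ 6 + √((8c − 5)/3) (as real numbers). Then there exists an (r,c)-circulant: there exist n ≥ 1 and a set S of nonzero elements of Z_n such that the circulant Circ(n, S) is r-regular and e(v) = c for every vertex v. -/

import Mathlib

def Circulant (n : ℕ) (S : Set (ZMod n)) : SimpleGraph (ZMod n) where
  Adj x y := x ≠ y ∧ x - y ∈ S ∪ -S
  symm := by
    constructor
    rintro x y ⟨hxy, h⟩
    refine ⟨hxy.symm, ?_⟩
    have hyx : y - x = -(x - y) := by ring
    rw [hyx]
    rcases h with h | h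
    · exact Or.inr (Set.neg_mem_neg.mpr h)
    · exact Or.inl (Set.mem_neg.mp h)
  loopless := ⟨fun x h => h.1 rfl⟩

noncomputable def nbhdEdgeCount {V : Type*} (G : SimpleGraph V) (v : V) : ℕ :=
  Nat.card (SimpleGraph.induce (G.neighborSet v) G).edgeSet

section Machinery

variable {n : ℕ} [NeZero n] (B : Finset (ZMod n))

lemma circ_adj (hsym : ∀ s ∈ B, -s ∈ B) (x y : ZMod n) :
    (Circulant n ↑B).Adj x y ↔ x ≠ y ∧ x - y ∈ B := by
  show x ≠ y ∧ x - y ∈ (↑B : Set (ZMod n)) ∪ -↑B ↔ _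
  constructor
  · rintro ⟨h1, h2⟩
    refine ⟨h1, ?_⟩
    rcases h2 with h | h
    · exact h
    · have : -(x-y) ∈ B := Set.mem_neg.mp h
      have := hsym _ this
      simpa using this
  · rintro ⟨h1, h2⟩
    exact ⟨h1, Or.inl h2⟩

lemma circ_neighborSet (hsym : ∀ s ∈ B, -s ∈ B) (h0 : (0 : ZMod n) ∉ B) (v : ZMod n) :
    (Circulant n ↑B).neighborSet v = ↑(B.image (fun s => v - s)) := by
  ext y
  simp only [SimpleGraph.mem_neighborSet, Finset.coe_image, Set.mem_image, Finset.mem_coe]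
  rw [circ_adj B hsym]
  constructor
  · rintro ⟨h1, h2⟩
    exact ⟨v - y, h2, by ring⟩
  · rintro ⟨s, hs, rfl⟩
    constructor
    · intro h
      apply h0
      have : s = 0 := by linear_combination h
      rwa [this] at hs
    · simpa using hs

lemma circ_card_neighbor (hsym : ∀ s ∈ B, -s ∈ B) (h0 : (0 : ZMod n) ∉ B) (v : ZMod n) :
    Nat.card ((Circulant n ↑B).neighborSet v) = B.card := by
  rw [circ_neighborSet B hsym h0 v]
  rw [Nat.card_coe_set_eq, Set.ncard_coe_finset]
  apply Finset.card_image_of_injective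
  intro s t hst
  linear_combination -hst

/-- the ordered pairs finset -/
def PairsFinset : Finset (ZMod n × ZMod n) :=
  (B ×ˢ B).filter fun q => q.1 ≠ q.2 ∧ q.1 - q.2 ∈ B

lemma circ_nbhd_edge (hsym : ∀ s ∈ B, -s ∈ B) (h0 : (0 : ZMod n) ∉ B) (v : ZMod n) :
    2 * nbhdEdgeCount (Circulant n ↑B) v = (PairsFinset B).card := by
  classical
  set G := Circulant n (↑B : Set (ZMod n))
  set Nv := G.neighborSet v
  have hNv : ∀ y : ZMod n, y ∈ Nv ↔ v - y ∈ B := by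
    intro y
    rw [show Nv = _ from circ_neighborSet B hsym h0 v]
    simp only [Finset.coe_image, Set.mem_image, Finset.mem_coe]
    constructor
    · rintro ⟨s, hs, rfl⟩
      simpa using hs
    · intro h
      exact ⟨v - y, h, by ring⟩
  set G' := SimpleGraph.induce Nv G with hG'
  haveI : Fintype ↥Nv := Fintype.ofFinite _
  haveI : DecidableRel G'.Adj := fun a b => Classical.dec _
  have hadj : ∀ x y : ↥Nv, G'.Adj x y ↔ (x:ZMod n) ≠ y ∧ (x:ZMod n) - y ∈ B := by
    intro x y
    show G.Adj x y ↔ _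
    exact circ_adj B hsym _ _
  -- darts of G' ≃ PairsFinset
  have hDart : Fintype.card G'.Dart = (PairsFinset B).card := by
    rw [← Fintype.card_coe (PairsFinset B)]
    apply Fintype.card_congr
    refine ⟨fun d => ⟨(v - (d.toProd.1 : ZMod n), v - (d.toProd.2 : ZMod n)), ?_⟩,
      fun q => ⟨(⟨v - q.1.1, ?_⟩, ⟨v - q.1.2, ?_⟩), ?_⟩, ?_, ?_⟩
    · have hd := d.adj
      rw [hadj] at hd
      simp only [PairsFinset, Finset.mem_filter, Finset.mem_product]
      have h1 := (hNv _).mp (d.toProd.1).2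
      have h2 := (hNv _).mp (d.toProd.2).2
      refine ⟨⟨h1, h2⟩, ?_, ?_⟩
      · intro h
        apply hd.1
        have : (d.toProd.1 : ZMod n) = d.toProd.2 := by linear_combination -h
        exact this
      · have : v - (d.toProd.1:ZMod n) - (v - (d.toProd.2:ZMod n))
            = -((d.toProd.1:ZMod n) - d.toProd.2) := by ring
        rw [this]
        exact hsym _ hd.2
    · rw [hNv]
      have := q.2
      simp only [PairsFinset, Finset.mem_filter, Finset.mem_product] at this
      simpa using this.1.1
    · rw [hNv]
      have := q.2
      simp only [PairsFinset, Finset.mem_filter, Finset.mem_product] at this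
      simpa using this.1.2
    · have hq := q.2
      simp only [PairsFinset, Finset.mem_filter, Finset.mem_product] at hq
      rw [hadj]
      constructor
      · intro h
        apply hq.2.1
        have : (q.1.1 : ZMod n) = q.1.2 := by linear_combination -h
        exact this
      · show v - q.1.1 - (v - q.1.2) ∈ B
        have : v - q.1.1 - (v - q.1.2) = -(q.1.1 - q.1.2) := by ring
        rw [this]
        exact hsym _ hq.2.2
    · intro d
      ext <;> simp
    · intro q
      ext <;> simp
  have h2 := SimpleGraph.dart_card_eq_twice_card_edges (G := G')
  rw [SimpleGraph.edgeFinset_card] at h2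
  have h3 : nbhdEdgeCount G v = Fintype.card G'.edgeSet := by
    rw [nbhdEdgeCount, Nat.card_eq_fintype_card]
  omega

end Machinery


section Transfer
variable {n : ℕ} [NeZero n]

lemma cast_eq_iff (x y : ℤ) : ((x : ZMod n) = y) ↔ (n:ℤ) ∣ x - y := by
  rw [ZMod.intCast_eq_intCast_iff, Int.modEq_iff_dvd, dvd_sub_comm]

variable (B₀ : Finset ℤ)

lemma cast_mem_image_iff (x : ℤ) :
    (x : ZMod n) ∈ B₀.image (Int.cast : ℤ → ZMod n) ↔ ∃ b ∈ B₀, (n:ℤ) ∣ x - b := by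
  simp only [Finset.mem_image]
  constructor
  · rintro ⟨b, hb, hbx⟩
    exact ⟨b, hb, (cast_eq_iff x b).mp hbx.symm⟩
  · rintro ⟨b, hb, hbx⟩
    exact ⟨b, hb, ((cast_eq_iff x b).mpr hbx).symm⟩

lemma transfer_card (hinj : ∀ x ∈ B₀, ∀ y ∈ B₀, (n:ℤ) ∣ x - y → x = y) :
    (B₀.image (Int.cast : ℤ → ZMod n)).card = B₀.card :=
  Finset.card_image_of_injOn fun x hx y hy h => hinj x hx y hy ((cast_eq_iff x y).mp h)

def PairsZ (n : ℕ) (B₀ : Finset ℤ) : Finset (ℤ × ℤ) :=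
  (B₀ ×ˢ B₀).filter fun q => q.1 ≠ q.2 ∧ ∃ b ∈ B₀, (n:ℤ) ∣ q.1 - q.2 - b

lemma transfer_pairs (hinj : ∀ x ∈ B₀, ∀ y ∈ B₀, (n:ℤ) ∣ x - y → x = y) :
    ((B₀.image (Int.cast : ℤ → ZMod n) ×ˢ B₀.image (Int.cast : ℤ → ZMod n)).filter
      fun q => q.1 ≠ q.2 ∧ q.1 - q.2 ∈ B₀.image (Int.cast : ℤ → ZMod n)).card
    = (PairsZ n B₀).card := by
  have himg : ((B₀.image (Int.cast : ℤ → ZMod n) ×ˢ B₀.image (Int.cast : ℤ → ZMod n)).filter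
      fun q => q.1 ≠ q.2 ∧ q.1 - q.2 ∈ B₀.image (Int.cast : ℤ → ZMod n))
      = (PairsZ n B₀).image (fun q => ((q.1 : ZMod n), (q.2 : ZMod n))) := by
    ext ⟨u, w⟩
    simp only [Finset.mem_filter, Finset.mem_product, Finset.mem_image, PairsZ, Prod.mk.injEq,
      Prod.exists]
    constructor
    · rintro ⟨⟨h1, h2⟩, h3, h4⟩
      obtain ⟨x, hx, rfl⟩ := h1
      obtain ⟨y, hy, rfl⟩ := h2
      refine ⟨x, y, ⟨⟨hx, hy⟩, ?_, ?_⟩, rfl, rfl⟩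
      · rintro rfl; exact h3 rfl
      · obtain ⟨b, hb, hbe⟩ := h4
        refine ⟨b, hb, ?_⟩
        have : ((x - y : ℤ) : ZMod n) = b := by push_cast; rw [hbe]
        have := (cast_eq_iff (x - y) b).mp this
        rwa [show x - y - b = (x-y) - b from rfl]
    · rintro ⟨x, y, ⟨⟨hx, hy⟩, hne, b, hb, hd⟩, rfl, rfl⟩
      refine ⟨⟨⟨x, hx, rfl⟩, ⟨y, hy, rfl⟩⟩, ?_, ?_⟩
      · intro h
        exact hne (hinj x hx y hy ((cast_eq_iff x y).mp h))
      · refine ⟨b, hb, ?_⟩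
        have : ((b : ZMod n)) = ((x - y : ℤ) : ZMod n) :=
          (cast_eq_iff b (x - y)).mpr (by rw [show b - (x-y) = -(x - y - b) by ring]; exact dvd_neg.mpr hd)
        rw [this]; push_cast; ring
  rw [himg]
  apply Finset.card_image_of_injOn
  rintro ⟨x, y⟩ hxy ⟨x', y'⟩ hxy' h
  simp only [PairsZ, Finset.mem_coe, Finset.mem_filter, Finset.mem_product] at hxy hxy'
  simp only [Prod.mk.injEq] at h
  obtain ⟨h1, h2⟩ := h
  have e1 := hinj x hxy.1.1 x' hxy'.1.1 ((cast_eq_iff x x').mp h1)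
  have e2 := hinj y hxy.1.2 y' hxy'.1.2 ((cast_eq_iff y y').mp h2)
  simp [e1, e2]

end Transfer


namespace CircConstr

/-! Parameters: `a` interval radius, `j ≤ a` refinement, `p` padding pairs,
`τ ∈ {0,1}` torsion pair, `η ∈ {0,1}` half element. -/

def Gz (a : ℕ) : ℤ := 2*a+2
def Mz (a p : ℕ) : ℤ := (2*p+2) * Gz a
def mz (a j : ℕ) : ℤ := 2*(a:ℤ)+1-j
noncomputable def Iaz (a : ℕ) : Finset ℤ := (Finset.Icc (-(a:ℤ)) a).erase 0
noncomputable def FarP (a p : ℕ) : Finset ℤ := (Finset.Icc (1:ℤ) p).image fun t => Mz a p + t * Gz a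
noncomputable def FarN (a p : ℕ) : Finset ℤ := (Finset.Icc (1:ℤ) p).image fun t => -(Mz a p + t * Gz a)
def Tz (a p τ : ℕ) : Finset ℤ := if τ = 1 then {2*Mz a p, -(2*Mz a p)} else ∅
def Hz (a p η : ℕ) : Finset ℤ := if η = 1 then {3*Mz a p} else ∅
noncomputable def B0 (a j p τ η : ℕ) : Finset ℤ :=
  ((((Iaz a ∪ {mz a j, -mz a j}) ∪ FarP a p) ∪ FarN a p) ∪ Tz a p τ) ∪ Hz a p η
def nnz (a p : ℕ) : ℕ := 6*((2*p+2)*(2*a+2))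

lemma nnz_cast (a p : ℕ) : ((nnz a p : ℕ) : ℤ) = 6 * Mz a p := by
  unfold nnz Mz Gz; push_cast; ring

lemma Gz_pos (a : ℕ) : 0 < Gz a := by unfold Gz; positivity

lemma Mz_eq (a p : ℕ) : Mz a p = 2*((p:ℤ) * Gz a) + 2 * Gz a := by simp [Mz]; ring

lemma Mz_big (a : ℕ) (p : ℕ) : 2*(a:ℤ)+2 ≤ Mz a p := by
  rw [Mz_eq]
  have h1 : 0 ≤ (p:ℤ) * Gz a := mul_nonneg (by positivity) (Gz_pos a).le
  have := Gz_pos a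
  simp [Gz] at *
  omega

lemma tG_bounds {t : ℤ} (a p : ℕ) (ht1 : 1 ≤ t) (ht2 : t ≤ p) :
    Gz a ≤ t * Gz a ∧ t * Gz a ≤ (p:ℤ) * Gz a := by
  have hG := (Gz_pos a).le
  constructor
  · nlinarith
  · nlinarith

lemma mem_Iaz {a : ℕ} {y : ℤ} : y ∈ Iaz a ↔ (-(a:ℤ) ≤ y ∧ y ≤ a ∧ y ≠ 0) := by
  simp only [Iaz, Finset.mem_erase, Finset.mem_Icc]; tauto

lemma mem_FarP {a p : ℕ} {y : ℤ} :
    y ∈ FarP a p ↔ ∃ t : ℤ, (1 ≤ t ∧ t ≤ p) ∧ y = Mz a p + t * Gz a := by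
  simp only [FarP, Finset.mem_image, Finset.mem_Icc]
  constructor
  · rintro ⟨t, ht, rfl⟩; exact ⟨t, ht, rfl⟩
  · rintro ⟨t, ht, rfl⟩; exact ⟨t, ht, rfl⟩

lemma mem_FarN {a p : ℕ} {y : ℤ} :
    y ∈ FarN a p ↔ ∃ t : ℤ, (1 ≤ t ∧ t ≤ p) ∧ y = -(Mz a p + t * Gz a) := by
  simp only [FarN, Finset.mem_image, Finset.mem_Icc]
  constructor
  · rintro ⟨t, ht, rfl⟩; exact ⟨t, ht, rfl⟩
  · rintro ⟨t, ht, rfl⟩; exact ⟨t, ht, rfl⟩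

lemma mem_Tz {a p τ : ℕ} {y : ℤ} :
    y ∈ Tz a p τ ↔ (τ = 1 ∧ (y = 2*Mz a p ∨ y = -(2*Mz a p))) := by
  unfold Tz; split_ifs with h <;> simp [h]

lemma mem_Hz {a p η : ℕ} {y : ℤ} : y ∈ Hz a p η ↔ (η = 1 ∧ y = 3*Mz a p) := by
  unfold Hz; split_ifs with h <;> simp [h]

lemma mem_B0 {a j p τ η : ℕ} {y : ℤ} : y ∈ B0 a j p τ η ↔
    (((((-(a:ℤ) ≤ y ∧ y ≤ a ∧ y ≠ 0) ∨ (y = mz a j ∨ y = -mz a j))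
    ∨ (∃ t : ℤ, (1 ≤ t ∧ t ≤ p) ∧ y = Mz a p + t * Gz a))
    ∨ (∃ t : ℤ, (1 ≤ t ∧ t ≤ p) ∧ y = -(Mz a p + t * Gz a)))
    ∨ (τ = 1 ∧ (y = 2*Mz a p ∨ y = -(2*Mz a p))))
    ∨ (η = 1 ∧ y = 3*Mz a p) := by
  simp only [B0, Finset.mem_union, mem_Iaz, mem_FarP, mem_FarN, mem_Tz, mem_Hz,
    Finset.mem_insert, Finset.mem_singleton]


lemma mz_bounds {a j : ℕ} (hj : j ≤ a) : (a:ℤ)+1 ≤ mz a j ∧ mz a j ≤ 2*(a:ℤ)+1 := by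
  unfold mz
  have : (j:ℤ) ≤ a := by exact_mod_cast hj
  omega

lemma pG_nonneg (a p : ℕ) : 0 ≤ (p:ℤ) * Gz a :=
  mul_nonneg (by positivity) (Gz_pos a).le

lemma Gz_eq (a : ℕ) : Gz a = 2*(a:ℤ)+2 := rfl

/-- coarse classification of elements of `B0`, in purely linear terms. -/
lemma classify {a j p τ η : ℕ} (hj : j ≤ a) {b : ℤ} (hb : b ∈ B0 a j p τ η) :
    ((-(2*(a:ℤ)+1) ≤ b ∧ b ≤ 2*(a:ℤ)+1 ∧ b ≠ 0)
    ∨ (Mz a p + Gz a ≤ b ∧ b ≤ Mz a p + (p:ℤ) * Gz a)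
    ∨ (-(Mz a p + (p:ℤ)*Gz a) ≤ b ∧ b ≤ -(Mz a p + Gz a))
    ∨ b = 2*Mz a p ∨ b = -(2*Mz a p) ∨ b = 3*Mz a p) := by
  rw [mem_B0] at hb
  have hm := mz_bounds (j := j) hj
  have h4 := Gz_pos a
  rcases hb with ((((h | h) | h) | h) | h) | h
  · left; omega
  · left; omega
  · obtain ⟨t, ht, rfl⟩ := h
    have := tG_bounds a p ht.1 ht.2
    right; left; omega
  · obtain ⟨t, ht, rfl⟩ := h
    have := tG_bounds a p ht.1 ht.2
    right; right; left; omega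
  · rcases h.2 with h2 | h2 <;> subst h2 <;> tauto
  · rw [h.2]; tauto

lemma B0_bounds {a j p τ η : ℕ} (hj : j ≤ a) {b : ℤ} (hb : b ∈ B0 a j p τ η) :
    -(2*Mz a p) ≤ b ∧ b ≤ 3*Mz a p ∧ b ≠ 0 := by
  have h1 := classify hj hb
  have h2 := Mz_big a p
  have h3 := pG_nonneg a p
  have h4 := Gz_pos a
  have h5 : (p:ℤ)*Gz a ≤ Mz a p := by rw [Mz_eq]; omega
  have h6 := Gz_eq a
  omega

lemma B0_inj {a j p τ η : ℕ} (hj : j ≤ a) :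
    ∀ x ∈ B0 a j p τ η, ∀ y ∈ B0 a j p τ η, ((nnz a p : ℕ) : ℤ) ∣ x - y → x = y := by
  intro x hx y hy hdvd
  rw [nnz_cast] at hdvd
  have bx := B0_bounds hj hx
  have by' := B0_bounds hj hy
  have h2 := Mz_big a p
  have : x - y = 0 := by
    refine Int.eq_zero_of_abs_lt_dvd hdvd ?_
    rw [abs_lt]; omega
  omega

lemma B0_ne_zero {a j p τ η : ℕ} (hj : j ≤ a) :
    ∀ b ∈ B0 a j p τ η, ¬ ((nnz a p : ℕ) : ℤ) ∣ b := by
  intro b hb hdvd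
  rw [nnz_cast] at hdvd
  have bx := B0_bounds hj hb
  have h2 := Mz_big a p
  have : b = 0 := by
    refine Int.eq_zero_of_abs_lt_dvd hdvd ?_
    rw [abs_lt]; omega
  omega

lemma M_not_mem {a j p τ η : ℕ} (hj : j ≤ a) : Mz a p ∉ B0 a j p τ η := by
  intro h
  have h1 := classify hj h
  have h2 := Mz_big a p
  have h3 := pG_nonneg a p
  have h4 := Gz_eq a
  have h5 : (p:ℤ)*Gz a ≤ Mz a p := by rw [Mz_eq]; omega
  omega

lemma neg_mem_B0 {a j p τ η : ℕ} {b : ℤ} (hb : b ∈ B0 a j p τ η) (hb3 : b ≠ 3*Mz a p) :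
    -b ∈ B0 a j p τ η := by
  rw [mem_B0] at hb ⊢
  rcases hb with ((((h | h) | h) | h) | h) | h
  · exact Or.inl (Or.inl (Or.inl (Or.inl (Or.inl (by omega)))))
  · exact Or.inl (Or.inl (Or.inl (Or.inl (Or.inr (by omega)))))
  · obtain ⟨t, ht, rfl⟩ := h
    exact Or.inl (Or.inl (Or.inr ⟨t, ht, rfl⟩))
  · obtain ⟨t, ht, rfl⟩ := h
    exact Or.inl (Or.inl (Or.inl (Or.inr ⟨t, ht, by omega⟩)))
  · rcases h.2 with h2 | h2 <;> subst h2
    · exact Or.inl (Or.inr ⟨h.1, Or.inr rfl⟩)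
    · exact Or.inl (Or.inr ⟨h.1, Or.inl (by omega)⟩)
  · exact absurd h.2 hb3

/-- the integral edge relation -/
def Edge (a j p τ η : ℕ) (x y : ℤ) : Prop :=
  x - y ∈ B0 a j p τ η ∨ (x = 2*Mz a p ∧ y = -(2*Mz a p)) ∨ (x = -(2*Mz a p) ∧ y = 2*Mz a p)

noncomputable instance (a j p τ η : ℕ) (x y : ℤ) : Decidable (Edge a j p τ η x y) := by
  unfold Edge; infer_instance

lemma torsion_tau {a j p τ η : ℕ} (hj : j ≤ a) {x : ℤ} (hx : x ∈ B0 a j p τ η)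
    (h : x = 2*Mz a p ∨ x = -(2*Mz a p)) : τ = 1 := by
  rw [mem_B0] at hx
  have h2 := Mz_big a p
  have h3 := pG_nonneg a p
  have h4 := Gz_eq a
  have hm := mz_bounds (j := j) hj
  have h5 : Mz a p = 2*((p:ℤ)*Gz a) + 2*Gz a := Mz_eq a p
  rcases hx with ((((h' | h') | h') | h') | h') | h'
  · exfalso; omega
  · exfalso; omega
  · obtain ⟨t, ht, he⟩ := h'
    exfalso
    have := tG_bounds a p ht.1 ht.2
    omega
  · obtain ⟨t, ht, he⟩ := h'
    exfalso
    have := tG_bounds a p ht.1 ht.2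
    omega
  · exact h'.1
  · exfalso; omega

lemma wrap {a j p τ η : ℕ} (hj : j ≤ a) {x y : ℤ}
    (hx : x ∈ B0 a j p τ η) (hy : y ∈ B0 a j p τ η) :
    (∃ b ∈ B0 a j p τ η, ((nnz a p : ℕ) : ℤ) ∣ x - y - b) ↔ Edge a j p τ η x y := by
  have h2 := Mz_big a p
  have h3 := pG_nonneg a p
  have h4 := Gz_eq a
  have h5 : Mz a p = 2*((p:ℤ)*Gz a) + 2*Gz a := Mz_eq a p
  have hM : 0 < Mz a p := by omega
  constructor
  · rintro ⟨b, hb, k, hk⟩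
    rw [nnz_cast] at hk
    have bx := B0_bounds hj hx
    have by' := B0_bounds hj hy
    have bb := B0_bounds hj hb
    have hkval : k = -1 ∨ k = 0 ∨ k = 1 := by
      rcases le_or_gt k (-2) with h | h
      · exfalso; nlinarith
      rcases le_or_gt 2 k with h' | h'
      · exfalso; nlinarith
      omega
    have cx := classify hj hx
    have cy := classify hj hy
    have cb := classify hj hb
    unfold Edge
    rcases hkval with rfl | rfl | rfl
    · right; omega
    · left
      have : x - y = b := by omega
      rwa [this]
    · right; omega
  · intro h
    rcases h with h | ⟨h1, h2'⟩ | ⟨h1, h2'⟩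
    · exact ⟨x - y, h, by simp⟩
    · have hτ : τ = 1 := torsion_tau hj hx (Or.inl h1)
      refine ⟨-(2*Mz a p), ?_, ⟨1, by rw [nnz_cast]; omega⟩⟩
      rw [mem_B0]
      exact Or.inl (Or.inr ⟨hτ, Or.inr rfl⟩)
    · have hτ : τ = 1 := torsion_tau hj hx (Or.inr h1)
      refine ⟨2*Mz a p, ?_, ⟨-1, by rw [nnz_cast]; omega⟩⟩
      rw [mem_B0]
      exact Or.inl (Or.inr ⟨hτ, Or.inl rfl⟩)


lemma mul_sub_G {G : ℤ} (hG : 0 < G) (s t : ℤ) :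
    s*G - t*G = 0 ∨ s*G - t*G ≤ -G ∨ G ≤ s*G - t*G := by
  rcases lt_trichotomy s t with h | h | h
  · right; left; nlinarith
  · left; rw [h]; ring
  · right; right; nlinarith

/-- the neighbourhood filter at `x`. -/
noncomputable def innerF (a j p τ η : ℕ) (x : ℤ) : Finset ℤ :=
  (B0 a j p τ η).filter fun y => x ≠ y ∧ Edge a j p τ η x y

lemma inner_interval {a j p τ η : ℕ} (hj : j ≤ a) {x : ℤ} (hx1 : 1 ≤ x) (hx2 : x ≤ (a:ℤ)) :
    innerF a j p τ η x =
      (((Finset.Icc (x-(a:ℤ)) a).erase 0).erase x) ∪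
        (({x - mz a j, mz a j} : Finset ℤ).filter fun _ => mz a j - (a:ℤ) ≤ x) := by
  have h2 := Mz_big a p
  have h3 := pG_nonneg a p
  have h4 := Gz_eq a
  have h5 := Mz_eq a p
  have hm := mz_bounds (j := j) hj
  ext y
  simp only [innerF, Finset.mem_filter, Finset.mem_union, Finset.mem_erase, Finset.mem_Icc,
    Finset.mem_insert, Finset.mem_singleton]
  constructor
  · rintro ⟨hyB, hxy, he⟩
    rw [mem_B0] at hyB
    rcases he with hd | ⟨hx', _⟩ | ⟨hx', _⟩
    rotate_left
    · exfalso; omega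
    · exfalso; omega
    rw [mem_B0] at hd
    rcases hyB with ((((hY | hY) | hY) | hY) | hY) | hY <;>
      rcases hd with ((((hD | hD) | hD) | hD) | hD) | hD <;>
      [skip; skip; skip; skip; skip; skip; skip; skip; skip; skip; skip; skip;
       skip; skip; skip; skip; skip; skip; skip; skip; skip; skip; skip; skip;
       skip; skip; skip; skip; skip; skip; skip; skip; skip; skip; skip; skip] <;>
      (try obtain ⟨t1, ht1, hY⟩ := hY) <;>
      (try obtain ⟨t2, ht2, hD⟩ := hD) <;>
      (try have hb1 := tG_bounds a p ht1.1 ht1.2) <;>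
      (try have hb2 := tG_bounds a p ht2.1 ht2.2) <;>
      (try have hd12 := mul_sub_G (Gz_pos a) t1 t2) <;>
      (try have hd21 := mul_sub_G (Gz_pos a) t2 t1) <;>
      omega
  · rintro (⟨hyx, hy0, hy1, hy2⟩ | ⟨hy, hcond⟩)
    · refine ⟨?_, by omega, Or.inl ?_⟩
      · rw [mem_B0]
        exact Or.inl (Or.inl (Or.inl (Or.inl (Or.inl (by omega)))))
      · rw [mem_B0]
        exact Or.inl (Or.inl (Or.inl (Or.inl (Or.inl (by omega)))))
    · rcases hy with rfl | rfl
      · refine ⟨?_, by omega, Or.inl ?_⟩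
        · rw [mem_B0]
          exact Or.inl (Or.inl (Or.inl (Or.inl (Or.inl (by omega)))))
        · rw [mem_B0]
          refine Or.inl (Or.inl (Or.inl (Or.inl (Or.inr (Or.inl (by omega))))))
      · refine ⟨?_, by omega, Or.inl ?_⟩
        · rw [mem_B0]
          exact Or.inl (Or.inl (Or.inl (Or.inl (Or.inr (Or.inl rfl)))))
        · rw [mem_B0]
          exact Or.inl (Or.inl (Or.inl (Or.inl (Or.inl (by omega)))))

lemma inner_m {a j p τ η : ℕ} (hj : j ≤ a) :
    innerF a j p τ η (mz a j) = Finset.Icc (mz a j - (a:ℤ)) (a:ℤ) := by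
  have h2 := Mz_big a p
  have h3 := pG_nonneg a p
  have h4 := Gz_eq a
  have h5 := Mz_eq a p
  have hm := mz_bounds (j := j) hj
  ext y
  simp only [innerF, Finset.mem_filter, Finset.mem_Icc]
  constructor
  · rintro ⟨hyB, hxy, he⟩
    rw [mem_B0] at hyB
    rcases he with hd | ⟨hx', _⟩ | ⟨hx', _⟩
    rotate_left
    · exfalso; omega
    · exfalso; omega
    rw [mem_B0] at hd
    rcases hyB with ((((hY | hY) | hY) | hY) | hY) | hY <;>
      rcases hd with ((((hD | hD) | hD) | hD) | hD) | hD <;>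
      (try obtain ⟨t1, ht1, hY⟩ := hY) <;>
      (try obtain ⟨t2, ht2, hD⟩ := hD) <;>
      (try have hb1 := tG_bounds a p ht1.1 ht1.2) <;>
      (try have hb2 := tG_bounds a p ht2.1 ht2.2) <;>
      (try have hd12 := mul_sub_G (Gz_pos a) t1 t2) <;>
      (try have hd21 := mul_sub_G (Gz_pos a) t2 t1) <;>
      omega
  · rintro ⟨hy1, hy2⟩
    refine ⟨?_, by omega, Or.inl ?_⟩
    · rw [mem_B0]
      exact Or.inl (Or.inl (Or.inl (Or.inl (Or.inl (by omega)))))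
    · rw [mem_B0]
      exact Or.inl (Or.inl (Or.inl (Or.inl (Or.inl (by omega)))))

lemma inner_far {a j p τ η : ℕ} (hj : j ≤ a) {t0 : ℤ} (ht0 : 1 ≤ t0 ∧ t0 ≤ (p:ℤ)) :
    innerF a j p τ η (Mz a p + t0 * Gz a) = ∅ := by
  have h2 := Mz_big a p
  have h3 := pG_nonneg a p
  have h4 := Gz_eq a
  have h5 := Mz_eq a p
  have hm := mz_bounds (j := j) hj
  have hb0 := tG_bounds a p ht0.1 ht0.2
  rw [Finset.eq_empty_iff_forall_notMem]
  intro y hy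
  simp only [innerF, Finset.mem_filter] at hy
  obtain ⟨hyB, hxy, he⟩ := hy
  rw [mem_B0] at hyB
  rcases he with hd | ⟨hx', _⟩ | ⟨hx', _⟩
  rotate_left
  · omega
  · omega
  rw [mem_B0] at hd
  rcases hyB with ((((hY | hY) | hY) | hY) | hY) | hY <;>
    rcases hd with ((((hD | hD) | hD) | hD) | hD) | hD <;>
    (try obtain ⟨t1, ht1, hY⟩ := hY) <;>
    (try obtain ⟨t2, ht2, hD⟩ := hD) <;>
    (try have hb1 := tG_bounds a p ht1.1 ht1.2) <;>
    (try have hb2 := tG_bounds a p ht2.1 ht2.2) <;>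
    (try have hd12 := mul_sub_G (Gz_pos a) t1 t2) <;>
    (try have hd01 := mul_sub_G (Gz_pos a) t0 t1) <;>
    (try have hd02 := mul_sub_G (Gz_pos a) t0 t2) <;>
    omega

lemma inner_2M {a j p τ η : ℕ} (hj : j ≤ a) (hτ : τ = 1) :
    innerF a j p τ η (2*Mz a p) = {-(2*Mz a p)} := by
  have h2 := Mz_big a p
  have h3 := pG_nonneg a p
  have h4 := Gz_eq a
  have h5 := Mz_eq a p
  have hm := mz_bounds (j := j) hj
  ext y
  simp only [innerF, Finset.mem_filter, Finset.mem_singleton]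
  constructor
  · rintro ⟨hyB, hxy, he⟩
    rw [mem_B0] at hyB
    rcases he with hd | ⟨hx', hy'⟩ | ⟨hx', hy'⟩
    rotate_left
    · exact hy'
    · exfalso; omega
    rw [mem_B0] at hd
    rcases hyB with ((((hY | hY) | hY) | hY) | hY) | hY <;>
      (try obtain ⟨t1, ht1, hY⟩ := hY) <;>
      rcases hd with ((((hD | hD) | hD) | hD) | hD) | hD <;>
      (try obtain ⟨t2, ht2, hD⟩ := hD) <;>
      (try have hb1 := tG_bounds a p ht1.1 ht1.2) <;>
      (try have hb2 := tG_bounds a p ht2.1 ht2.2) <;>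
      (try have hd12 := mul_sub_G (Gz_pos a) t1 t2) <;>
      omega
  · rintro rfl
    refine ⟨?_, by omega, Or.inr (Or.inl ⟨rfl, rfl⟩)⟩
    rw [mem_B0]
    exact Or.inl (Or.inr ⟨hτ, Or.inr rfl⟩)

lemma inner_neg2M {a j p τ η : ℕ} (hj : j ≤ a) (hτ : τ = 1) :
    innerF a j p τ η (-(2*Mz a p)) = {2*Mz a p} := by
  have h2 := Mz_big a p
  have h3 := pG_nonneg a p
  have h4 := Gz_eq a
  have h5 := Mz_eq a p
  have hm := mz_bounds (j := j) hj
  ext y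
  simp only [innerF, Finset.mem_filter, Finset.mem_singleton]
  constructor
  · rintro ⟨hyB, hxy, he⟩
    rw [mem_B0] at hyB
    rcases he with hd | ⟨hx', hy'⟩ | ⟨hx', hy'⟩
    rotate_left
    · exfalso; omega
    · exact hy'
    rw [mem_B0] at hd
    rcases hyB with ((((hY | hY) | hY) | hY) | hY) | hY <;>
      (try obtain ⟨t1, ht1, hY⟩ := hY) <;>
      rcases hd with ((((hD | hD) | hD) | hD) | hD) | hD <;>
      (try obtain ⟨t2, ht2, hD⟩ := hD) <;>
      (try have hb1 := tG_bounds a p ht1.1 ht1.2) <;>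
      (try have hb2 := tG_bounds a p ht2.1 ht2.2) <;>
      (try have hd12 := mul_sub_G (Gz_pos a) t1 t2) <;>
      omega
  · rintro rfl
    refine ⟨?_, by omega, Or.inr (Or.inr ⟨rfl, rfl⟩)⟩
    rw [mem_B0]
    exact Or.inl (Or.inr ⟨hτ, Or.inl rfl⟩)

lemma inner_3M {a j p τ η : ℕ} (hj : j ≤ a) :
    innerF a j p τ η (3*Mz a p) = ∅ := by
  have h2 := Mz_big a p
  have h3 := pG_nonneg a p
  have h4 := Gz_eq a
  have h5 := Mz_eq a p
  have hm := mz_bounds (j := j) hj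
  rw [Finset.eq_empty_iff_forall_notMem]
  intro y hy
  simp only [innerF, Finset.mem_filter] at hy
  obtain ⟨hyB, hxy, he⟩ := hy
  rw [mem_B0] at hyB
  rcases he with hd | ⟨hx', _⟩ | ⟨hx', _⟩
  rotate_left
  · omega
  · omega
  rw [mem_B0] at hd
  rcases hyB with ((((hY | hY) | hY) | hY) | hY) | hY <;>
    (try obtain ⟨t1, ht1, hY⟩ := hY) <;>
    rcases hd with ((((hD | hD) | hD) | hD) | hD) | hD <;>
    (try obtain ⟨t2, ht2, hD⟩ := hD) <;>
    (try have hb1 := tG_bounds a p ht1.1 ht1.2) <;>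
    (try have hb2 := tG_bounds a p ht2.1 ht2.2) <;>
    (try have hd12 := mul_sub_G (Gz_pos a) t1 t2) <;>
    omega


lemma edge_neg {a j p τ η : ℕ} (hj : j ≤ a) {x z : ℤ} (hx : x ∈ B0 a j p τ η)
    (hxr : -(Mz a p + (p:ℤ)*Gz a) ≤ x ∧ x ≤ Mz a p + (p:ℤ)*Gz a)
    (hz : z ∈ B0 a j p τ η) (he : Edge a j p τ η x z) :
    -z ∈ B0 a j p τ η ∧ Edge a j p τ η (-x) (-z) := by
  have h2 := Mz_big a p
  have h3 := pG_nonneg a p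
  have h4 := Gz_eq a
  have h5 := Mz_eq a p
  rcases he with hd | ⟨h1, _⟩ | ⟨h1, _⟩
  rotate_left
  · exfalso; omega
  · exfalso; omega
  have hz3 : z ≠ 3*Mz a p := by
    rintro rfl
    have hb := classify hj hd
    have hxM := M_not_mem (τ := τ) (η := η) (p := p) hj
    have : x ≠ Mz a p := fun h => hxM (h ▸ hx)
    omega
  have hd3 : x - z ≠ 3*Mz a p := by
    intro h
    have hb := classify hj hz
    have hxM := M_not_mem (τ := τ) (η := η) (p := p) hj
    have : x ≠ Mz a p := fun h' => hxM (h' ▸ hx)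
    omega
  refine ⟨neg_mem_B0 hz hz3, Or.inl ?_⟩
  rw [show -x - -z = -(x - z) by ring]
  exact neg_mem_B0 hd hd3

lemma inner_neg {a j p τ η : ℕ} (hj : j ≤ a) {x : ℤ} (hx : x ∈ B0 a j p τ η)
    (hxr : -(Mz a p + (p:ℤ)*Gz a) ≤ x ∧ x ≤ Mz a p + (p:ℤ)*Gz a) :
    (innerF a j p τ η (-x)).card = (innerF a j p τ η x).card := by
  have h2 := Mz_big a p
  have h3 := pG_nonneg a p
  have h4 := Gz_eq a
  have h5 := Mz_eq a p
  have hx3 : x ≠ 3*Mz a p := by omega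
  have hnx : -x ∈ B0 a j p τ η := neg_mem_B0 hx hx3
  have himg : innerF a j p τ η (-x) = (innerF a j p τ η x).image Neg.neg := by
    ext z
    simp only [innerF, Finset.mem_filter, Finset.mem_image]
    constructor
    · rintro ⟨hzB, hxz, he⟩
      obtain ⟨h6, h7⟩ := edge_neg hj hnx (by omega) hzB he
      rw [neg_neg] at h7
      exact ⟨-z, ⟨h6, by omega, h7⟩, by ring⟩
    · rintro ⟨w, ⟨hwB, hxw, he⟩, rfl⟩
      obtain ⟨h6, h7⟩ := edge_neg hj hx hxr hwB he
      exact ⟨h6, by omega, h7⟩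
  rw [himg, Finset.card_image_of_injective _ neg_injective]

/-- interval inner count -/
lemma inner_interval_card {a j p τ η : ℕ} (hj : j ≤ a) {x : ℤ} (hx1 : 1 ≤ x) (hx2 : x ≤ (a:ℤ)) :
    ((innerF a j p τ η x).card : ℤ) =
      2*(a:ℤ) - 1 - x + (if mz a j - (a:ℤ) ≤ x then 2 else 0) := by
  have hm := mz_bounds (j := j) hj
  rw [inner_interval hj hx1 hx2]
  rw [Finset.card_union_of_disjoint]
  · have c1 : (((Finset.Icc (x-(a:ℤ)) a).erase 0).erase x).card = (2*(a:ℤ)-1-x).toNat := by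
      rw [Finset.card_erase_of_mem, Finset.card_erase_of_mem]
      · rw [Int.card_Icc]
        omega
      · simp only [Finset.mem_erase, Finset.mem_Icc]
        omega
      · simp only [Finset.mem_erase, Finset.mem_Icc]
        constructor
        · omega
        · omega
    rw [c1]
    by_cases hc : mz a j - (a:ℤ) ≤ x
    · rw [if_pos hc]
      rw [Finset.filter_true_of_mem (fun _ _ => hc)]
      rw [Finset.card_insert_of_notMem (by simp; omega), Finset.card_singleton]
      push_cast
      omega
    · rw [if_neg hc]
      rw [Finset.filter_false_of_mem (fun _ _ => hc)]
      simp
      omega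
  · rw [Finset.disjoint_right]
    intro z hz
    simp only [Finset.mem_filter, Finset.mem_insert, Finset.mem_singleton] at hz
    simp only [Finset.mem_erase, Finset.mem_Icc]
    have hm2 := hm
    rcases hz with ⟨rfl | rfl, hc⟩ <;> omega

lemma inner_m_card {a j p τ η : ℕ} (hj : j ≤ a) :
    (innerF a j p τ η (mz a j)).card = j := by
  rw [inner_m hj, Int.card_Icc]
  have hm := mz_bounds (j := j) hj
  unfold mz
  have : (j:ℤ) ≤ a := by exact_mod_cast hj
  omega


section Ranges
variable {a j p τ η : ℕ} {b : ℤ}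

lemma range_pair (h : b ∈ ({mz a j, -mz a j} : Finset ℤ)) : b = mz a j ∨ b = -mz a j := by
  simpa using h

lemma range_FarP (h : b ∈ FarP a p) :
    Mz a p + Gz a ≤ b ∧ b ≤ Mz a p + (p:ℤ)*Gz a := by
  rw [mem_FarP] at h
  obtain ⟨t, ht, rfl⟩ := h
  have := tG_bounds a p ht.1 ht.2
  omega

lemma range_FarN (h : b ∈ FarN a p) :
    -(Mz a p + (p:ℤ)*Gz a) ≤ b ∧ b ≤ -(Mz a p + Gz a) := by
  rw [mem_FarN] at h
  obtain ⟨t, ht, rfl⟩ := h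
  have := tG_bounds a p ht.1 ht.2
  omega

lemma range_Tz (h : b ∈ Tz a p τ) : b = 2*Mz a p ∨ b = -(2*Mz a p) := (mem_Tz.mp h).2

lemma range_Hz (h : b ∈ Hz a p η) : b = 3*Mz a p := (mem_Hz.mp h).2

end Ranges

section Cards
variable (a j p τ η : ℕ)

lemma disjP {X Y : Finset ℤ} (h : ∀ b, b ∈ X → b ∈ Y → False) : Disjoint X Y :=
  Finset.disjoint_left.mpr h

lemma disj_facts (hj : j ≤ a) :
    Disjoint (Iaz a) ({mz a j, -mz a j} : Finset ℤ) ∧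
    Disjoint (Iaz a ∪ {mz a j, -mz a j}) (FarP a p) ∧
    Disjoint ((Iaz a ∪ {mz a j, -mz a j}) ∪ FarP a p) (FarN a p) ∧
    Disjoint (((Iaz a ∪ {mz a j, -mz a j}) ∪ FarP a p) ∪ FarN a p) (Tz a p τ) ∧
    Disjoint ((((Iaz a ∪ {mz a j, -mz a j}) ∪ FarP a p) ∪ FarN a p) ∪ Tz a p τ) (Hz a p η) := by
  have h2 := Mz_big a p
  have h3 := pG_nonneg a p
  have h4 := Gz_eq a
  have h5 := Mz_eq a p
  have hm := mz_bounds (j := j) hj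
  have d1 : Disjoint (Iaz a) ({mz a j, -mz a j} : Finset ℤ) :=
    disjP fun b h1 h2' => by have := mem_Iaz.mp h1; have := range_pair h2'; omega
  have dIfp : Disjoint (Iaz a) (FarP a p) :=
    disjP fun b h1 h2' => by have := mem_Iaz.mp h1; have := range_FarP h2'; omega
  have dIfn : Disjoint (Iaz a) (FarN a p) :=
    disjP fun b h1 h2' => by have := mem_Iaz.mp h1; have := range_FarN h2'; omega
  have dIt : Disjoint (Iaz a) (Tz a p τ) :=
    disjP fun b h1 h2' => by have := mem_Iaz.mp h1; have := range_Tz h2'; omega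
  have dIh : Disjoint (Iaz a) (Hz a p η) :=
    disjP fun b h1 h2' => by have := mem_Iaz.mp h1; have := range_Hz h2'; omega
  have dPfp : Disjoint ({mz a j, -mz a j} : Finset ℤ) (FarP a p) :=
    disjP fun b h1 h2' => by have := range_pair h1; have := range_FarP h2'; omega
  have dPfn : Disjoint ({mz a j, -mz a j} : Finset ℤ) (FarN a p) :=
    disjP fun b h1 h2' => by have := range_pair h1; have := range_FarN h2'; omega
  have dPt : Disjoint ({mz a j, -mz a j} : Finset ℤ) (Tz a p τ) :=
    disjP fun b h1 h2' => by have := range_pair h1; have := range_Tz h2'; omega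
  have dPh : Disjoint ({mz a j, -mz a j} : Finset ℤ) (Hz a p η) :=
    disjP fun b h1 h2' => by have := range_pair h1; have := range_Hz h2'; omega
  have dFpFn : Disjoint (FarP a p) (FarN a p) :=
    disjP fun b h1 h2' => by have := range_FarP h1; have := range_FarN h2'; omega
  have dFpT : Disjoint (FarP a p) (Tz a p τ) :=
    disjP fun b h1 h2' => by have := range_FarP h1; have := range_Tz h2'; omega
  have dFpH : Disjoint (FarP a p) (Hz a p η) :=
    disjP fun b h1 h2' => by have := range_FarP h1; have := range_Hz h2'; omega
  have dFnT : Disjoint (FarN a p) (Tz a p τ) :=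
    disjP fun b h1 h2' => by have := range_FarN h1; have := range_Tz h2'; omega
  have dFnH : Disjoint (FarN a p) (Hz a p η) :=
    disjP fun b h1 h2' => by have := range_FarN h1; have := range_Hz h2'; omega
  have dTH : Disjoint (Tz a p τ) (Hz a p η) :=
    disjP fun b h1 h2' => by have := range_Tz h1; have := range_Hz h2'; omega
  refine ⟨d1, ?_, ?_, ?_, ?_⟩ <;>
    simp only [Finset.disjoint_union_left] <;>
    refine ⟨?_, ?_⟩ <;> first
      | exact dIfp | exact dIfn | exact dIt | exact dIh
      | exact dPfp | exact dPfn | exact dPt | exact dPh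
      | exact dFpFn | exact dFpT | exact dFpH
      | exact dFnT | exact dFnH | exact dTH
      | (refine ⟨?_, ?_⟩ <;> first
          | exact dIfp | exact dIfn | exact dIt | exact dIh
          | exact dPfp | exact dPfn | exact dPt | exact dPh
          | exact dFpFn | exact dFpT | exact dFpH
          | exact dFnT | exact dFnH | exact dTH)
      | (refine ⟨⟨?_, ?_⟩, ?_⟩ <;> first
          | exact dIfp | exact dIfn | exact dIt | exact dIh
          | exact dPfp | exact dPfn | exact dPt | exact dPh
          | exact dFpFn | exact dFpT | exact dFpH
          | exact dFnT | exact dFnH | exact dTH)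
      | (refine ⟨⟨⟨?_, ?_⟩, ?_⟩, ?_⟩ <;> first
          | exact dIfp | exact dIfn | exact dIt | exact dIh
          | exact dPfp | exact dPfn | exact dPt | exact dPh
          | exact dFpFn | exact dFpT | exact dFpH
          | exact dFnT | exact dFnH | exact dTH)

lemma card_Iaz : (Iaz a).card = 2*a := by
  unfold Iaz
  rw [Finset.card_erase_of_mem (by simp), Int.card_Icc]
  omega

lemma card_FarP : (FarP a p).card = p := by
  unfold FarP
  rw [Finset.card_image_of_injOn, Int.card_Icc]
  · omega
  · intro s _ t _ h
    simp only at h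
    have hG := Gz_pos a
    have h2 : s * Gz a = t * Gz a := by linarith
    exact mul_right_cancel₀ (ne_of_gt hG) h2

lemma card_FarN : (FarN a p).card = p := by
  unfold FarN
  rw [Finset.card_image_of_injOn, Int.card_Icc]
  · omega
  · intro s _ t _ h
    simp only at h
    have hG := Gz_pos a
    have h2 : s * Gz a = t * Gz a := by linarith
    exact mul_right_cancel₀ (ne_of_gt hG) h2

lemma card_B0 (hj : j ≤ a) (hτ : τ ≤ 1) (hη : η ≤ 1) :
    (B0 a j p τ η).card = 2*a + 2 + 2*p + 2*τ + η := by
  obtain ⟨d1, d2, d3, d4, d5⟩ := disj_facts a j p τ η hj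
  have h2 := Mz_big a p
  have hm := mz_bounds (j := j) hj
  unfold B0
  rw [Finset.card_union_of_disjoint d5, Finset.card_union_of_disjoint d4,
    Finset.card_union_of_disjoint d3, Finset.card_union_of_disjoint d2,
    Finset.card_union_of_disjoint d1]
  rw [card_Iaz, card_FarP, card_FarN]
  have cpair : ({mz a j, -mz a j} : Finset ℤ).card = 2 := by
    rw [Finset.card_insert_of_notMem (by simp; omega), Finset.card_singleton]
  have cT : (Tz a p τ).card = 2*τ := by
    interval_cases τ
    · simp [Tz]
    · unfold Tz
      rw [if_pos rfl, Finset.card_insert_of_notMem (by simp; omega), Finset.card_singleton]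
  have cH : (Hz a p η).card = η := by
    interval_cases η
    · simp [Hz]
    · simp [Hz]
  omega

end Cards


section Sums
variable (a j p τ η : ℕ)

lemma gauss : 2 * (∑ x ∈ Finset.Icc (1:ℤ) (a:ℤ), x) = (a:ℤ)*(a+1) := by
  induction a with
  | zero => simp
  | succ a ih =>
    have hins : Finset.Icc (1:ℤ) ((a:ℕ)+1:ℕ) = insert ((a:ℤ)+1) (Finset.Icc (1:ℤ) a) := by
      ext z
      simp only [Finset.mem_insert, Finset.mem_Icc]
      push_cast
      omega
    push_cast at hins ⊢
    rw [hins, Finset.sum_insert (by simp)]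
    ring_nf
    ring_nf at ih
    linarith

lemma sum_pos_half (hj : j ≤ a) :
    2 * (∑ x ∈ Finset.Icc (1:ℤ) (a:ℤ), ((innerF a j p τ η x).card : ℤ))
      = 3*(a:ℤ)*a - 3*a + 4*j := by
  have hm := mz_bounds (j := j) hj
  have hcongr : ∑ x ∈ Finset.Icc (1:ℤ) (a:ℤ), ((innerF a j p τ η x).card : ℤ)
      = ∑ x ∈ Finset.Icc (1:ℤ) (a:ℤ),
          (2*(a:ℤ) - 1 - x + (if mz a j - (a:ℤ) ≤ x then 2 else 0)) := by
    refine Finset.sum_congr rfl fun x hx => ?_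
    rw [Finset.mem_Icc] at hx
    exact inner_interval_card hj hx.1 hx.2
  rw [hcongr, Finset.sum_add_distrib]
  have hsum1 : ∑ x ∈ Finset.Icc (1:ℤ) (a:ℤ), (2*(a:ℤ) - 1 - x)
      = (Finset.Icc (1:ℤ) (a:ℤ)).card • (2*(a:ℤ)-1) - ∑ x ∈ Finset.Icc (1:ℤ) (a:ℤ), x := by
    rw [Finset.sum_sub_distrib, Finset.sum_const]
  have hsum2 : ∑ x ∈ Finset.Icc (1:ℤ) (a:ℤ), (if mz a j - (a:ℤ) ≤ x then (2:ℤ) else 0)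
      = 2 * (j:ℤ) := by
    rw [← Finset.sum_filter]
    have : (Finset.Icc (1:ℤ) (a:ℤ)).filter (fun x => mz a j - (a:ℤ) ≤ x)
        = Finset.Icc (mz a j - (a:ℤ)) (a:ℤ) := by
      ext z
      simp only [Finset.mem_filter, Finset.mem_Icc]
      omega
    rw [this, Finset.sum_const, Int.card_Icc]
    have hj' : (j:ℤ) ≤ a := by exact_mod_cast hj
    have : ((a:ℤ) + 1 - (mz a j - a)).toNat = j := by unfold mz; omega
    rw [this]
    simp [mul_comm]
  rw [hsum1, hsum2, Int.card_Icc]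
  have hg := gauss a
  have hc : (((a:ℤ) + 1 - 1).toNat : ℤ) = a := by omega
  rw [show (((a:ℤ)+1-1).toNat) • (2*(a:ℤ)-1) = (((a:ℤ)+1-1).toNat : ℤ) * (2*(a:ℤ)-1) from
    nsmul_eq_mul _ _, hc]
  linarith

lemma Iaz_decomp : Iaz a = Finset.Icc (1:ℤ) (a:ℤ) ∪ (Finset.Icc (1:ℤ) (a:ℤ)).image Neg.neg := by
  ext y
  simp only [mem_Iaz, Finset.mem_union, Finset.mem_Icc, Finset.mem_image]
  constructor
  · intro h
    rcases le_or_gt y 0 with hy | hy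
    · exact Or.inr ⟨-y, by omega, by omega⟩
    · exact Or.inl (by omega)
  · rintro (h | ⟨w, hw, rfl⟩) <;> omega

lemma interval_mem_B0 {x : ℤ} (hj : j ≤ a) (h1 : 1 ≤ x) (h2 : x ≤ (a:ℤ)) :
    x ∈ B0 a j p τ η := by
  rw [mem_B0]
  exact Or.inl (Or.inl (Or.inl (Or.inl (Or.inl (by omega)))))

lemma interval_bound {x : ℤ} (h1 : -(2*(a:ℤ)+1) ≤ x) (h2 : x ≤ 2*(a:ℤ)+1) :
    -(Mz a p + (p:ℤ)*Gz a) ≤ x ∧ x ≤ Mz a p + (p:ℤ)*Gz a := by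
  have hb := Mz_big a p
  have h3 := pG_nonneg a p
  omega

lemma sum_Iaz (hj : j ≤ a) :
    (∑ x ∈ Iaz a, ((innerF a j p τ η x).card : ℤ)) = 3*(a:ℤ)*a - 3*a + 4*j := by
  rw [Iaz_decomp]
  rw [Finset.sum_union]
  · have himg : ∑ x ∈ (Finset.Icc (1:ℤ) (a:ℤ)).image Neg.neg, ((innerF a j p τ η x).card : ℤ)
        = ∑ x ∈ Finset.Icc (1:ℤ) (a:ℤ), ((innerF a j p τ η x).card : ℤ) := by
      rw [Finset.sum_image (by intro x _ y _ h; omega)]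
      refine Finset.sum_congr rfl fun x hx => ?_
      rw [Finset.mem_Icc] at hx
      have := inner_neg hj (interval_mem_B0 a j p τ η hj hx.1 hx.2)
        (interval_bound a p (by omega) (by omega))
      rw [this]
    rw [himg]
    have := sum_pos_half a j p τ η hj
    linarith
  · rw [Finset.disjoint_left]
    rintro b hb1 hb2
    rw [Finset.mem_Icc] at hb1
    simp only [Finset.mem_image, Finset.mem_Icc] at hb2
    obtain ⟨w, hw, hwb⟩ := hb2
    omega

lemma m_mem_B0 (hj : j ≤ a) : mz a j ∈ B0 a j p τ η := by
  rw [mem_B0]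
  exact Or.inl (Or.inl (Or.inl (Or.inl (Or.inr (Or.inl rfl)))))

lemma sum_pair (hj : j ≤ a) :
    (∑ x ∈ ({mz a j, -mz a j} : Finset ℤ), ((innerF a j p τ η x).card : ℤ)) = 2*(j:ℤ) := by
  have hm := mz_bounds (j := j) hj
  rw [Finset.sum_insert (by simp; omega), Finset.sum_singleton]
  have h1 : (innerF a j p τ η (mz a j)).card = j := inner_m_card hj
  have h2 := inner_neg (τ := τ) (η := η) hj (m_mem_B0 a j p τ η hj)
    (interval_bound a p (by omega) (by omega))
  rw [h1, h2, h1]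
  ring

lemma sum_FarP (hj : j ≤ a) :
    (∑ x ∈ FarP a p, ((innerF a j p τ η x).card : ℤ)) = 0 := by
  refine Finset.sum_eq_zero fun x hx => ?_
  rw [mem_FarP] at hx
  obtain ⟨t, ht, rfl⟩ := hx
  rw [inner_far hj ht]
  simp

lemma farP_mem_B0 {t : ℤ} (hj : j ≤ a) (ht : 1 ≤ t ∧ t ≤ (p:ℤ)) :
    Mz a p + t * Gz a ∈ B0 a j p τ η := by
  rw [mem_B0]
  exact Or.inl (Or.inl (Or.inl (Or.inr ⟨t, ht, rfl⟩)))

lemma sum_FarN (hj : j ≤ a) :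
    (∑ x ∈ FarN a p, ((innerF a j p τ η x).card : ℤ)) = 0 := by
  refine Finset.sum_eq_zero fun x hx => ?_
  rw [mem_FarN] at hx
  obtain ⟨t, ht, rfl⟩ := hx
  have hb := tG_bounds a p ht.1 ht.2
  have hneg := inner_neg (τ := τ) (η := η) hj (farP_mem_B0 a j p τ η hj ht)
    (by have h1 := Mz_big a p
        have h2 := pG_nonneg a p
        have h3 := Gz_pos a
        constructor <;> omega)
  rw [hneg, inner_far hj ht]
  simp

lemma sum_Tz (hj : j ≤ a) (hτ : τ ≤ 1) :
    (∑ x ∈ Tz a p τ, ((innerF a j p τ η x).card : ℤ)) = 2*(τ:ℤ) := by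
  interval_cases τ
  · simp [Tz]
  · unfold Tz
    rw [if_pos rfl]
    have hM : 0 < Mz a p := by
      have := Mz_big a p
      omega
    rw [Finset.sum_insert (by simp; omega), Finset.sum_singleton]
    rw [inner_2M hj rfl, inner_neg2M hj rfl]
    simp

lemma sum_Hz (hj : j ≤ a) (hη : η ≤ 1) :
    (∑ x ∈ Hz a p η, ((innerF a j p τ η x).card : ℤ)) = 0 := by
  interval_cases η
  · simp [Hz]
  · unfold Hz
    rw [if_pos rfl, Finset.sum_singleton, inner_3M hj]
    simp

lemma pairs_count (hj : j ≤ a) (hτ : τ ≤ 1) (hη : η ≤ 1) :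
    ((PairsZ (nnz a p) (B0 a j p τ η)).card : ℤ) + 3*(a:ℤ)
      = 3*(a:ℤ)*a + 6*(j:ℤ) + 2*(τ:ℤ) := by
  have hfilter : PairsZ (nnz a p) (B0 a j p τ η)
      = ((B0 a j p τ η) ×ˢ (B0 a j p τ η)).filter
          fun q => q.1 ≠ q.2 ∧ Edge a j p τ η q.1 q.2 := by
    unfold PairsZ
    refine Finset.filter_congr fun q hq => ?_
    rw [Finset.mem_product] at hq
    have hw := wrap (η := η) hj hq.1 hq.2
    constructor
    · rintro ⟨h1, h2⟩; exact ⟨h1, hw.mp h2⟩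
    · rintro ⟨h1, h2⟩; exact ⟨h1, hw.mpr h2⟩
  have hcard : (PairsZ (nnz a p) (B0 a j p τ η)).card
      = ∑ x ∈ B0 a j p τ η, (innerF a j p τ η x).card := by
    rw [hfilter]
    rw [Finset.card_filter, Finset.sum_product]
    refine Finset.sum_congr rfl fun x _ => ?_
    rw [innerF, Finset.card_filter]
  rw [hcard]
  push_cast
  obtain ⟨d1, d2, d3, d4, d5⟩ := disj_facts a j p τ η hj
  unfold B0
  rw [Finset.sum_union d5, Finset.sum_union d4, Finset.sum_union d3, Finset.sum_union d2,
    Finset.sum_union d1]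
  rw [sum_Iaz a j p τ η hj, sum_pair a j p τ η hj, sum_FarP a j p τ η hj,
    sum_FarN a j p τ η hj, sum_Tz a j p τ η hj hτ, sum_Hz a j p τ η hj hη]
  ring

end Sums

end CircConstr





section Final

open CircConstr

/-- Abstract construction step: given suitable parameters, build the circulant. -/
lemma construction (a j p τ η r c : ℕ) (hj : j ≤ a) (hτ : τ ≤ 1) (hη : η ≤ 1)
    (hr : r = 2*a + 2 + 2*p + 2*τ + η)
    (hcc : 2*c + 3*a = 3*a*a + 6*j + 2*τ) :
    ∃ (n : ℕ), 1 ≤ n ∧ ∃ S : Set (ZMod n), (∀ s ∈ S, s ≠ 0) ∧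
      (∀ v : ZMod n, Nat.card ((Circulant n S).neighborSet v) = r) ∧
      (∀ v : ZMod n, nbhdEdgeCount (Circulant n S) v = c) := by
  have hnn : 0 < nnz a p := by unfold nnz; positivity
  refine ⟨nnz a p, hnn, ?_⟩
  haveI : NeZero (nnz a p) := ⟨by omega⟩
  set B : Finset (ZMod (nnz a p)) := (B0 a j p τ η).image (Int.cast : ℤ → ZMod (nnz a p))
    with hB
  have hinj := B0_inj (τ := τ) (η := η) (p := p) hj
  have hsymB : ∀ s ∈ B, -s ∈ B := by
    intro s hs
    rw [hB, Finset.mem_image] at hs ⊢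
    obtain ⟨b, hb, rfl⟩ := hs
    by_cases hb3 : b = 3*Mz a p
    · refine ⟨b, hb, ?_⟩
      have h6 : ((-b : ℤ) : ZMod (nnz a p)) = ((b : ℤ) : ZMod (nnz a p)) := by
        rw [cast_eq_iff, nnz_cast]
        exact ⟨-1, by omega⟩
      nth_rewrite 1 [← h6]
      push_cast
      ring
    · exact ⟨-b, neg_mem_B0 hb hb3, by push_cast; ring⟩
  have h0B : (0 : ZMod (nnz a p)) ∉ B := by
    rw [hB, Finset.mem_image]
    rintro ⟨b, hb, hb0⟩
    have : ((nnz a p : ℕ) : ℤ) ∣ b := by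
      rwa [ZMod.intCast_zmod_eq_zero_iff_dvd] at hb0
    exact B0_ne_zero hj b hb this
  refine ⟨(B : Set (ZMod (nnz a p))), ?_, ?_, ?_⟩
  · intro s hs
    rintro rfl
    exact h0B hs
  · intro v
    rw [circ_card_neighbor B hsymB h0B v, hB, transfer_card _ hinj, card_B0 a j p τ η hj hτ hη]
    omega
  · intro v
    have h2e := circ_nbhd_edge B hsymB h0B v
    have hpf : (PairsFinset B).card = (PairsZ (nnz a p) (B0 a j p τ η)).card := by
      rw [hB]
      exact transfer_pairs _ hinj
    have hpc := pairs_count a j p τ η hj hτ hη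
    have : (PairsZ (nnz a p) (B0 a j p τ η)).card = 2 * c := by
      have hcc' : (2*c + 3*a : ℤ) = 3*(a:ℤ)*a + 6*j + 2*τ := by exact_mod_cast hcc
      omega
    omega

theorem exists_circulant_of_large_r (c r : ℕ) (hc0 : 1 ≤ c) (hr0 : 1 ≤ r)
    (hc : c % 3 ≠ 2)
    (hr : 6 + Real.sqrt ((8 * (c : ℝ) - 5) / 3) ≤ (r : ℝ)) :
    ∃ (n : ℕ), 1 ≤ n ∧ ∃ S : Set (ZMod n), (∀ s ∈ S, s ≠ 0) ∧
      (∀ v : ZMod n, Nat.card ((Circulant n S).neighborSet v) = r) ∧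
      (∀ v : ZMod n, nbhdEdgeCount (Circulant n S) v = c) := by
  -- r ≥ 7
  have hr7 : 7 ≤ r := by
    have h1 : (1:ℝ) ≤ Real.sqrt ((8 * (c : ℝ) - 5) / 3) := by
      apply Real.le_sqrt_of_sq_le
      have : (1:ℝ) ≤ c := by exact_mod_cast hc0
      nlinarith
    have : (7:ℝ) ≤ r := by linarith
    exact_mod_cast this
  set τ := c % 3 with hτdef
  have hτ : τ ≤ 1 := by omega
  set c' := c / 3 with hc'def
  have hceq : c = 3*c' + τ := by omega
  -- find minimal a
  have hex : ∃ a : ℕ, 2*c' ≤ a*(a+1) := ⟨2*c', by nlinarith⟩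
  obtain ⟨a, ha, hamin⟩ : ∃ a : ℕ, 2*c' ≤ a*(a+1) ∧ ∀ b < a, ¬ (2*c' ≤ b*(b+1)) :=
    ⟨Nat.find hex, Nat.find_spec hex, fun b hb => Nat.find_min hex hb⟩
  -- j
  have heven : Even (a*(a-1)) := by
    rcases Nat.even_or_odd a with h | h
    · exact h.mul_right _
    · refine (Nat.even_mul).mpr (Or.inr ?_)
      rcases h with ⟨k, hk⟩
      exact ⟨k, by omega⟩
  obtain ⟨K, hK⟩ := heven
  have hub : a*(a-1) ≤ 2*c' := by
    rcases Nat.eq_zero_or_pos a with rfl | hpos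
    · simp
    · have := hamin (a-1) (by omega)
      have h2 : (a-1)*(a-1+1) = a*(a-1) := by
        rcases a with _ | a'
        · omega
        · simp [Nat.succ_sub_one]; ring
      omega
  obtain ⟨j, h2j⟩ : ∃ j : ℕ, 2*j = 2*c' - a*(a-1) := ⟨(2*c' - a*(a-1)) / 2, by omega⟩
  have hj : j ≤ a := by
    have h3 : a*(a+1) - a*(a-1) = 2*a := by
      rcases Nat.eq_zero_or_pos a with rfl | hpos
      · simp
      · have : a*(a+1) = a*(a-1) + 2*a := by
          rcases a with _ | a'
          · omega
          · simp [Nat.succ_sub_one]; ring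
        omega
    omega
  have hcc : 2*c + 3*a = 3*a*a + 6*j + 2*τ := by
    have h1 : 2*c = 6*c' + 2*τ := by omega
    have h2 : 6*c' = 3*(a*(a-1)) + 6*j := by omega
    have h3 : 3*(a*(a-1)) + 3*a = 3*a*a := by
      rcases a with _ | n
      · simp
      · simp only [Nat.add_sub_cancel]
        ring
    omega
  -- degree bound : 2a+2+2τ ≤ r
  have hrge : 2*a + 2 + 2*τ ≤ r := by
    rcases le_or_gt a 1 with hsmall | hbig
    · omega
    · -- a ≥ 2 : use the sqrt bound
      have hj1 : 1 ≤ j := by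
        have := hamin (a-1) (by omega)
        have h2 : (a-1)*(a-1+1) = a*(a-1) := by
          rcases a with _ | a'
          · omega
          · simp [Nat.succ_sub_one]; ring
        omega
      have hkey : 3*(a*(a-1)) + 6 + 2*τ ≤ 2*c := by omega
      have hsq : ((2*(a:ℝ) + 2*τ - 4))^2 ≤ (8 * (c:ℝ) - 5)/3 := by
        have hc2 : (3*((a:ℝ)*((a:ℝ)-1)) + 6 + 2*(τ:ℝ)) ≤ 2*c := by
          have ha1 : (1:ℝ) ≤ (a:ℝ) := by exact_mod_cast (by omega : 1 ≤ a)
          have : ((3*(a*(a-1)) + 6 + 2*τ : ℕ) : ℝ) ≤ ((2*c : ℕ) : ℝ) := by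
            exact_mod_cast hkey
          push_cast at this
          have hcast : ((a:ℝ) - 1) = ((a - 1 : ℕ) : ℝ) := by
            rw [Nat.cast_sub (by omega)]; simp
          rw [hcast]
          linarith
        have hτR : (τ:ℝ) ≤ 1 := by exact_mod_cast hτ
        have haR : (2:ℝ) ≤ (a:ℝ) := by exact_mod_cast hbig
        nlinarith
      have hsqrt : 2*(a:ℝ) + 2*τ - 4 ≤ Real.sqrt ((8 * (c : ℝ) - 5) / 3) :=
        Real.le_sqrt_of_sq_le hsq
      have : (2*(a:ℝ) + 2 + 2*τ) ≤ r := by linarith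
      exact_mod_cast this
  obtain ⟨p, η, hη1, hrpe⟩ : ∃ p η : ℕ, η ≤ 1 ∧ r = 2*a + 2 + 2*p + 2*τ + η :=
    ⟨(r - (2*a + 2 + 2*τ)) / 2, (r - (2*a + 2 + 2*τ)) % 2, by omega, by omega⟩
  exact construction a j p τ η r c hj hτ hη1 hrpe hcc

end Final
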